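/- arXiv:0905.0835 — 2 statements merged into one kernel-verified Lean document; each statement's English description precedes it below -/
import Mathlib

section
/- Fix β ∈ (0,1), ε > 0, and N ≥ 1. There exists a finite set M ⊂ ℤ^N such that for all x = (x_1,…,x_N) ∈ ℤ^N \ M, the quantity Δ := (Σ_{i=1}^N (2 x_i (β^{x_i} − 1) + 1 + β^{x_i})) / (1 + Σ_{i=1}^N β^{x_i}) satisfies Δ ≤ −ε. -/
open Filter

theorem stmt_1 (β ε : ℝ) (hβ0 : 0 < β) (hβ1 : β < 1) (hε : 0 < ε)
    (N : ℕ) (hN : 1 ≤ N) :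
    ∃ M : Finset (Fin N → ℤ), ∀ x : Fin N → ℤ, x ∉ M →
      (∑ i : Fin N, (2 * (x i : ℝ) * (β ^ (x i) - 1) + 1 + β ^ (x i))) /
        (1 + ∑ i : Fin N, β ^ (x i)) ≤ -ε := by
  set h : ℤ → ℝ := fun n => 2 * (n : ℝ) * (β ^ n - 1) + 1 + (1 + ε) * β ^ n with hh
  -- h tends to -∞ along atTop
  have hTop : Tendsto h atTop atBot := by
    have hlin : Tendsto (fun n : ℤ => 2 * (β - 1) * (n : ℝ) + (2 + ε)) atTop atBot := by
      have := (tendsto_intCast_atTop_atTop (R := ℝ)).const_mul_atTop_of_neg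
        (r := 2 * (β - 1)) (by nlinarith)
      exact tendsto_atBot_add_const_right _ _ this
    refine tendsto_atBot_mono' atTop ?_ hlin
    filter_upwards [eventually_ge_atTop (1 : ℤ)] with n hn
    have hn0 : (0:ℝ) ≤ (n:ℝ) := by exact_mod_cast (show (0:ℤ) ≤ n by omega)
    have h1 : β ^ n ≤ β ^ (1:ℤ) := zpow_le_zpow_right_of_le_one₀ hβ0 hβ1.le hn
    have h2 : β ^ n ≤ 1 := by
      calc β ^ n ≤ β ^ (1:ℤ) := h1
      _ ≤ 1 := by rw [zpow_one]; exact hβ1.le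
    have h3 : 2 * (n:ℝ) * (β ^ n - 1) ≤ 2 * (n:ℝ) * (β - 1) := by
      rw [zpow_one] at h1
      nlinarith
    have h4 : (1+ε) * β ^ n ≤ (1+ε) * 1 := mul_le_mul_of_nonneg_left h2 (by linarith)
    simp only [hh]
    nlinarith
  -- h tends to -∞ along atBot
  have hTopBd : ∀ᶠ m : ℕ in atTop, (m : ℝ) * β ^ m ≤ 1/4 := by
    have := tendsto_self_mul_const_pow_of_lt_one hβ0.le hβ1
    exact this.eventually_le_const (by norm_num)
  obtain ⟨m₀, hm₀⟩ := eventually_atTop.1 hTopBd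
  have hBot : Tendsto h atBot atBot := by
    have hlin2 : Tendsto (fun n : ℤ => 2 * (n : ℝ) + 1) atBot atBot := by
      have := ((tendsto_intCast_atBot_iff (R := ℝ)).mpr tendsto_id).const_mul_atBot (r := 2) (by norm_num)
      exact tendsto_atBot_add_const_right _ _ this
    refine tendsto_atBot_mono' atBot ?_ hlin2
    filter_upwards [eventually_le_atBot (-(m₀ : ℤ)),
      ((tendsto_intCast_atBot_iff (R := ℝ)).mpr tendsto_id).eventually
        (eventually_le_atBot (-(2 + ε)/2))] with n hn hn2
    simp only [id_eq] at hn2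
    have hn0 : n ≤ 0 := by omega
    set m : ℕ := (-n).toNat with hm
    have hmn : (m : ℤ) = -n := Int.toNat_of_nonneg (by omega)
    have hmm : m₀ ≤ m := by
      rw [hm, Int.le_toNat (by omega)]; omega
    have hb : (m : ℝ) * β ^ m ≤ 1/4 := hm₀ m hmm
    have hn' : n = -(m:ℤ) := by omega
    have hbz : β ^ n = (β ^ m)⁻¹ := by
      rw [hn', zpow_neg, zpow_natCast]
    have hpow : (0:ℝ) < β ^ m := pow_pos hβ0 m
    have hc1 : β ^ m * (β ^ m)⁻¹ = 1 := mul_inv_cancel₀ hpow.ne'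
    have hβinv : 4 * (m : ℝ) ≤ β ^ n := by
      rw [hbz]
      nlinarith [mul_pos hpow (inv_pos.2 hpow)]
    have hcast : ((m : ℝ)) = -(n : ℝ) := by exact_mod_cast hmn
    have hg : -(4:ℝ) * (n:ℝ) ≤ β ^ n := by rw [hcast] at hβinv; linarith
    have hcoef : 2 * (n:ℝ) + 1 + ε ≤ -1 := by linarith
    have hpos : (0:ℝ) < β ^ n := zpow_pos hβ0 n
    have h5 : β ^ n * (2 * (n:ℝ) + 1 + ε) ≤ -β ^ n := by nlinarith
    simp only [hh]
    nlinarith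
  have hcof : Tendsto h cofinite atBot := by
    rw [Int.cofinite_eq, tendsto_sup]; exact ⟨hBot, hTop⟩
  -- h is bounded above
  have hC : ∃ C : ℝ, 0 ≤ C ∧ ∀ n, h n ≤ C := by
    have hfin : {n : ℤ | ¬ h n ≤ 0}.Finite :=
      Filter.eventually_cofinite.mp (hcof.eventually (eventually_le_atBot (0:ℝ)))
    obtain ⟨C, hCub⟩ := (hfin.image h).bddAbove
    refine ⟨max C 0, le_max_right _ _, fun n => ?_⟩
    by_cases hn : h n ≤ 0
    · exact hn.trans (le_max_right _ _)
    · exact le_trans (hCub (Set.mem_image_of_mem h hn)) (le_max_left _ _)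
  obtain ⟨C, hC0, hCle⟩ := hC
  set D : ℝ := ε + ((N:ℝ) - 1) * C with hD
  have hfin2 : {n : ℤ | ¬ h n ≤ -D}.Finite :=
    Filter.eventually_cofinite.mp (hcof.eventually (eventually_le_atBot (-D)))
  refine ⟨Fintype.piFinset fun _ => hfin2.toFinset, fun x hx => ?_⟩
  have : ∃ i, x i ∉ hfin2.toFinset := by
    by_contra hcon
    push_neg at hcon
    exact hx (by simpa [Fintype.mem_piFinset] using hcon)
  obtain ⟨i, hi⟩ := this
  have hxi : h (x i) ≤ -D := by
    by_contra hcon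
    exact hi (by simpa [Set.Finite.mem_toFinset] using hcon)
  -- sum bound
  have hsum : ∑ j : Fin N, h (x j) ≤ -ε := by
    have hsplit : h (x i) + ∑ j ∈ Finset.univ.erase i, h (x j) = ∑ j : Fin N, h (x j) :=
      Finset.add_sum_erase _ (fun j => h (x j)) (Finset.mem_univ i)
    have hcard : (Finset.univ.erase i).card = N - 1 := by
      rw [Finset.card_erase_of_mem (Finset.mem_univ i), Finset.card_univ, Fintype.card_fin]
    have hrest : ∑ j ∈ Finset.univ.erase i, h (x j) ≤ ((N:ℝ) - 1) * C := by
      calc ∑ j ∈ Finset.univ.erase i, h (x j) ≤ (Finset.univ.erase i).card • C :=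
            Finset.sum_le_card_nsmul _ _ _ (fun j _ => hCle (x j))
        _ = ((N - 1 : ℕ) : ℝ) * C := by rw [hcard, nsmul_eq_mul]
        _ = ((N:ℝ) - 1) * C := by rw [Nat.cast_sub hN]; norm_num
    linarith [hsplit, hxi, hrest]
  -- conclude
  have hbpos : (0:ℝ) < 1 + ∑ i : Fin N, β ^ (x i) := by
    have : (0:ℝ) ≤ ∑ i : Fin N, β ^ (x i) :=
      Finset.sum_nonneg fun i _ => (zpow_pos hβ0 _).le
    linarith
  rw [div_le_iff₀ hbpos]
  have hexp : ∑ j : Fin N, h (x j) =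
      (∑ i : Fin N, (2 * (x i : ℝ) * (β ^ (x i) - 1) + 1 + β ^ (x i))) +
        ε * ∑ i : Fin N, β ^ (x i) := by
    rw [Finset.mul_sum, ← Finset.sum_add_distrib]
    exact Finset.sum_congr rfl fun j _ => by simp only [hh]; ring
  rw [hexp] at hsum
  linarith
end

section
/- Let β ∈ (0,1). Consider the Markov chain ζ(t) on ℤ² with transitions from (x₁,x₂): to (x₁+1,x₂) with probability β^{x₁+x₂}/Z, to (x₁,x₂+1) with probability β^{x₂}/Z, and to (x₁−1,x₂−1) with probability β^{x₁}/Z, where Z = β^{x₁+x₂} + β^{x₂} + β^{x₁}. Let f(x₁,x₂) = β^{1−x₁−x₂} + β^{−3x₁+x₂} + β^{3x₁−4x₂} + β^{x₁+4x₂}. Then there exists C = C(β) > 0 such that whenever x₁² + x₂² > C², the expected one-step change E[f(ζ(t+1)) − f(ζ(t)) | ζ(t) = (x₁,x₂)] ≤ −(1−β). -/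
set_option maxHeartbeats 1600000

private lemma bmono {β : ℝ} (hβ0 : 0 < β) (hβ1 : β < 1) {m n : ℤ} (h : m ≤ n) :
    β ^ n ≤ β ^ m :=
  zpow_le_zpow_right_of_le_one₀ hβ0 hβ1.le h

private lemma tiny {β : ℝ} (hβ0 : 0 < β) (hβ1 : β < 1) {n₁ : ℤ} (hsm : β ^ n₁ ≤ β / 1000)
    {Cp Cn : ℝ} (hCp0 : 0 ≤ Cp) (hCp : Cp ≤ 5 * (1 - β)) (hCn : 1 - β ≤ Cn)
    {E F : ℤ} (hEF : F + n₁ + 10 ≤ E) :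
    Cp * β ^ E ≤ β / 100 * (Cn * β ^ F) := by
  have hFp : (0:ℝ) < β ^ F := zpow_pos hβ0 F
  have hn₁p : (0:ℝ) < β ^ n₁ := zpow_pos hβ0 n₁
  have h10p : (0:ℝ) < β ^ (10:ℤ) := zpow_pos hβ0 _
  have h1 : β ^ E ≤ β ^ F * β ^ n₁ * β ^ (10:ℤ) := by
    rw [← zpow_add₀ (ne_of_gt hβ0), ← zpow_add₀ (ne_of_gt hβ0)]
    exact bmono hβ0 hβ1 hEF
  have h10 : β ^ (10:ℤ) ≤ 1 := by
    have h := bmono hβ0 hβ1 (show (0:ℤ) ≤ 10 by norm_num)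
    simpa using h
  have h2 : β ^ E ≤ β ^ F * (β / 1000) := by
    calc β ^ E ≤ β ^ F * β ^ n₁ * β ^ (10:ℤ) := h1
    _ ≤ β ^ F * (β/1000) * 1 := by
        apply mul_le_mul (mul_le_mul_of_nonneg_left hsm hFp.le) h10 h10p.le
        positivity
    _ = β ^ F * (β/1000) := by ring
  have hCp5 : (0:ℝ) ≤ 5 * (1 - β) := by linarith
  calc Cp * β ^ E ≤ (5*(1-β)) * (β ^ F * (β/1000)) :=
        mul_le_mul hCp h2 (zpow_pos hβ0 E).le hCp5
  _ ≤ β/100 * ((1-β) * β ^ F) := by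
        nlinarith [mul_nonneg (mul_nonneg hβ0.le hFp.le) (show (0:ℝ) ≤ 1 - β by linarith)]
  _ ≤ β/100 * (Cn * β ^ F) := by
        apply mul_le_mul_of_nonneg_left (mul_le_mul_of_nonneg_right hCn hFp.le)
        positivity

private lemma caseA (β : ℝ) (hβ0 : 0 < β) (hβ1 : β < 1) (n₁ : ℤ) (hn₁ : 1 ≤ n₁)
    (hsm : β ^ n₁ ≤ β / 1000) (k l : ℤ) (hk : 10*n₁+100 ≤ k) (hlk : l ≤ k) :
    (1-β) * β ^ (0*k+0*l+0) + (1-β) * β ^ ((-1)*k+0*l+0) + (1-β^3) * β ^ ((-2)*k+2*l+(-3)) + (1-β^4) * β ^ (3*k+(-3)*l+(-4)) + (1-β^5) * β ^ (2*k+4*l+(-5)) + (1-β) * β ^ (1*k+1*l+0) + (1-β) * β ^ (1*k+0*l+0) + (1-β) * β ^ (0*k+1*l+0)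
    ≤ (1-β^2) * β ^ (0*k+(-1)*l+1) + (1-β) * β ^ ((-3)*k+2*l+0) + (1-β^2) * β ^ ((-2)*k+1*l+0) + (1-β^3) * β ^ (4*k+(-3)*l+0) + (1-β) * β ^ (4*k+(-4)*l+0) + (1-β) * β ^ (2*k+5*l+0) + (1-β^4) * β ^ (1*k+5*l+0) := by
  have c1p : (0:ℝ) ≤ 1 - β := by linarith
  have hb2 : β^2 ≤ β := by nlinarith
  have hb3 : β^3 ≤ β^2 := by nlinarith
  have hb4 : β^4 ≤ β^3 := by nlinarith
  have hb5 : β^5 ≤ β^4 := by nlinarith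
  have hq2 : (0:ℝ) ≤ β^2 := by positivity
  have hq3 : (0:ℝ) ≤ β^3 := by positivity
  have hq4 : (0:ℝ) ≤ β^4 := by positivity
  have hq5 : (0:ℝ) ≤ β^5 := by positivity
  have c2p : (0:ℝ) ≤ 1 - β^2 := by linarith
  have c3p : (0:ℝ) ≤ 1 - β^3 := by linarith
  have c4p : (0:ℝ) ≤ 1 - β^4 := by linarith
  have c5p : (0:ℝ) ≤ 1 - β^5 := by linarith
  have hc2 : (1:ℝ) - β ≤ 1 - β^2 := by linarith
  have hc3 : (1:ℝ) - β ≤ 1 - β^3 := by linarith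
  have hc4 : (1:ℝ) - β ≤ 1 - β^4 := by linarith
  have h51 : (1:ℝ) - β ≤ 5*(1-β) := by linarith
  have h53 : (1:ℝ) - β^3 ≤ 5*(1-β) := by nlinarith [mul_nonneg c1p (show (0:ℝ) ≤ 2 - β - β^2 by linarith)]
  have h54 : (1:ℝ) - β^4 ≤ 5*(1-β) := by nlinarith [mul_nonneg c1p (show (0:ℝ) ≤ 4 - β - β^2 - β^3 by linarith)]
  have h55 : (1:ℝ) - β^5 ≤ 5*(1-β) := by nlinarith [mul_nonneg c1p (show (0:ℝ) ≤ 4 - β - β^2 - β^3 - β^4 by linarith)]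
  have hm1n : (0:ℝ) ≤ (1-β^2) * β ^ (0*k+(-1)*l+1) := mul_nonneg c2p (zpow_pos hβ0 _).le
  have hm2n : (0:ℝ) ≤ (1-β) * β ^ ((-3)*k+2*l+0) := mul_nonneg c1p (zpow_pos hβ0 _).le
  have hm3n : (0:ℝ) ≤ (1-β^2) * β ^ ((-2)*k+1*l+0) := mul_nonneg c2p (zpow_pos hβ0 _).le
  have hm4n : (0:ℝ) ≤ (1-β^3) * β ^ (4*k+(-3)*l+0) := mul_nonneg c3p (zpow_pos hβ0 _).le
  have hm5n : (0:ℝ) ≤ (1-β) * β ^ (4*k+(-4)*l+0) := mul_nonneg c1p (zpow_pos hβ0 _).le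
  have hm6n : (0:ℝ) ≤ (1-β) * β ^ (2*k+5*l+0) := mul_nonneg c1p (zpow_pos hβ0 _).le
  have hm7n : (0:ℝ) ≤ (1-β^4) * β ^ (1*k+5*l+0) := mul_nonneg c4p (zpow_pos hβ0 _).le
  have hP0 : (1-β) * β ^ (0*k+0*l+0) ≤ β/100 * ((1-β^2) * β ^ ((-2)*k+1*l+0)) :=
    tiny hβ0 hβ1 hsm c1p h51 hc2 (by omega)
  have hP1 : (1-β) * β ^ ((-1)*k+0*l+0) ≤ (1-β) * β ^ ((-2)*k+1*l+0) :=
    mul_le_mul_of_nonneg_left (bmono hβ0 hβ1 (by omega)) c1p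
  have hP2 : (1-β^3) * β ^ ((-2)*k+2*l+(-3)) ≤ β/100 * ((1-β) * β ^ ((-3)*k+2*l+0)) :=
    tiny hβ0 hβ1 hsm c3p h53 (le_refl ((1:ℝ)-β)) (by omega)
  have hP3 : (1-β^4) * β ^ (3*k+(-3)*l+(-4)) ≤ β/100 * ((1-β^2) * β ^ ((-2)*k+1*l+0)) :=
    tiny hβ0 hβ1 hsm c4p h54 hc2 (by omega)
  have hP6 : (1-β) * β ^ (1*k+0*l+0) ≤ β/100 * ((1-β^2) * β ^ ((-2)*k+1*l+0)) :=
    tiny hβ0 hβ1 hsm c1p h51 hc2 (by omega)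
  have hP7 : (1-β) * β ^ (0*k+1*l+0) ≤ β/100 * ((1-β^2) * β ^ ((-2)*k+1*l+0)) :=
    tiny hβ0 hβ1 hsm c1p h51 hc2 (by omega)
  have htn3 : (0:ℝ) ≤ β/100 * ((1-β^2) * β ^ ((-2)*k+1*l+0)) :=
    mul_nonneg (by positivity) (mul_nonneg c2p (zpow_pos hβ0 _).le)
  have htn7 : (0:ℝ) ≤ β/100 * ((1-β^4) * β ^ (1*k+5*l+0)) :=
    mul_nonneg (by positivity) (mul_nonneg c4p (zpow_pos hβ0 _).le)
  have htn1 : (0:ℝ) ≤ β/100 * ((1-β^2) * β ^ (0*k+(-1)*l+1)) :=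
    mul_nonneg (by positivity) (mul_nonneg c2p (zpow_pos hβ0 _).le)
  have htn2 : (0:ℝ) ≤ β/100 * ((1-β) * β ^ ((-3)*k+2*l+0)) :=
    mul_nonneg (by positivity) (mul_nonneg c1p (zpow_pos hβ0 _).le)
  have hcoefA3 : (0:ℝ) ≤ (1-β^2) - (1-β) - 5*(β/100)*(1-β^2) := by
    nlinarith [mul_nonneg (mul_nonneg hβ0.le c1p) (show (0:ℝ) ≤ 19 - β by linarith)]
  have hbud3 : (1-β) * β ^ ((-2)*k+1*l+0) + 5*(β/100 * ((1-β^2) * β ^ ((-2)*k+1*l+0))) ≤ (1-β^2) * β ^ ((-2)*k+1*l+0) := by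
    nlinarith [mul_nonneg hcoefA3 (zpow_pos hβ0 ((-2)*k+1*l+0)).le]
  have hbud7 : 2*(β/100 * ((1-β^4) * β ^ (1*k+5*l+0))) ≤ (1-β^4) * β ^ (1*k+5*l+0) := by
    nlinarith [mul_nonneg (mul_nonneg c4p (zpow_pos hβ0 (1*k+5*l+0)).le) (show (0:ℝ) ≤ 1 - β/50 by linarith)]
  have hbud1 : β/100 * ((1-β^2) * β ^ (0*k+(-1)*l+1)) ≤ (1-β^2) * β ^ (0*k+(-1)*l+1) := by
    nlinarith [mul_nonneg (mul_nonneg c2p (zpow_pos hβ0 (0*k+(-1)*l+1)).le) (show (0:ℝ) ≤ 1 - β/100 by linarith)]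
  have hbud2 : β/100 * ((1-β) * β ^ ((-3)*k+2*l+0)) ≤ (1-β) * β ^ ((-3)*k+2*l+0) := by
    nlinarith [mul_nonneg (mul_nonneg c1p (zpow_pos hβ0 ((-3)*k+2*l+0)).le) (show (0:ℝ) ≤ 1 - β/100 by linarith)]
  rcases le_or_gt 0 l with hl0 | hl0
  · have hP4 : (1-β^5) * β ^ (2*k+4*l+(-5)) ≤ β/100 * ((1-β^2) * β ^ ((-2)*k+1*l+0)) :=
    tiny hβ0 hβ1 hsm c5p h55 hc2 (by omega)
    have hP5 : (1-β) * β ^ (1*k+1*l+0) ≤ β/100 * ((1-β^2) * β ^ (0*k+(-1)*l+1)) :=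
      tiny hβ0 hβ1 hsm c1p h51 hc2 (by omega)
    linarith [hP0,hP1,hP2,hP3,hP4,hP5,hP6,hP7,hbud3,hbud7,hbud1,hbud2,hm1n,hm2n,hm3n,hm4n,hm5n,hm6n,hm7n,htn3,htn7,htn1,htn2]
  · have hP4 : (1-β^5) * β ^ (2*k+4*l+(-5)) ≤ β/100 * ((1-β^4) * β ^ (1*k+5*l+0)) :=
      tiny hβ0 hβ1 hsm c5p h55 hc4 (by omega)
    rcases le_or_gt (-(9*n₁+89)) (2*l) with hl5 | hl5
    · have hP5 : (1-β) * β ^ (1*k+1*l+0) ≤ β/100 * ((1-β^2) * β ^ (0*k+(-1)*l+1)) :=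
        tiny hβ0 hβ1 hsm c1p h51 hc2 (by omega)
      linarith [hP0,hP1,hP2,hP3,hP4,hP5,hP6,hP7,hbud3,hbud7,hbud1,hbud2,hm1n,hm2n,hm3n,hm4n,hm5n,hm6n,hm7n,htn3,htn7,htn1,htn2]
    · have hP5 : (1-β) * β ^ (1*k+1*l+0) ≤ β/100 * ((1-β^4) * β ^ (1*k+5*l+0)) :=
        tiny hβ0 hβ1 hsm c1p h51 hc4 (by omega)
      linarith [hP0,hP1,hP2,hP3,hP4,hP5,hP6,hP7,hbud3,hbud7,hbud1,hbud2,hm1n,hm2n,hm3n,hm4n,hm5n,hm6n,hm7n,htn3,htn7,htn1,htn2]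

private lemma caseB (β : ℝ) (hβ0 : 0 < β) (hβ1 : β < 1) (n₁ : ℤ) (hn₁ : 1 ≤ n₁)
    (hsm : β ^ n₁ ≤ β / 1000) (k l : ℤ) (hl : 10*n₁+100 ≤ l) (hkl : k < l)
    (hk' : -(10*n₁+100) < k) :
    (1-β) * β ^ (0*k+0*l+0) + (1-β) * β ^ ((-1)*k+0*l+0) + (1-β^3) * β ^ ((-2)*k+2*l+(-3)) + (1-β^4) * β ^ (3*k+(-3)*l+(-4)) + (1-β^5) * β ^ (2*k+4*l+(-5)) + (1-β) * β ^ (1*k+1*l+0) + (1-β) * β ^ (1*k+0*l+0) + (1-β) * β ^ (0*k+1*l+0)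
    ≤ (1-β^2) * β ^ (0*k+(-1)*l+1) + (1-β) * β ^ ((-3)*k+2*l+0) + (1-β^2) * β ^ ((-2)*k+1*l+0) + (1-β^3) * β ^ (4*k+(-3)*l+0) + (1-β) * β ^ (4*k+(-4)*l+0) + (1-β) * β ^ (2*k+5*l+0) + (1-β^4) * β ^ (1*k+5*l+0) := by
  have c1p : (0:ℝ) ≤ 1 - β := by linarith
  have hb2 : β^2 ≤ β := by nlinarith
  have hb3 : β^3 ≤ β^2 := by nlinarith
  have hb4 : β^4 ≤ β^3 := by nlinarith
  have hb5 : β^5 ≤ β^4 := by nlinarith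
  have hq2 : (0:ℝ) ≤ β^2 := by positivity
  have hq3 : (0:ℝ) ≤ β^3 := by positivity
  have hq4 : (0:ℝ) ≤ β^4 := by positivity
  have hq5 : (0:ℝ) ≤ β^5 := by positivity
  have c2p : (0:ℝ) ≤ 1 - β^2 := by linarith
  have c3p : (0:ℝ) ≤ 1 - β^3 := by linarith
  have c4p : (0:ℝ) ≤ 1 - β^4 := by linarith
  have c5p : (0:ℝ) ≤ 1 - β^5 := by linarith
  have hc2 : (1:ℝ) - β ≤ 1 - β^2 := by linarith
  have hc3 : (1:ℝ) - β ≤ 1 - β^3 := by linarith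
  have hc4 : (1:ℝ) - β ≤ 1 - β^4 := by linarith
  have h51 : (1:ℝ) - β ≤ 5*(1-β) := by linarith
  have h53 : (1:ℝ) - β^3 ≤ 5*(1-β) := by nlinarith [mul_nonneg c1p (show (0:ℝ) ≤ 2 - β - β^2 by linarith)]
  have h54 : (1:ℝ) - β^4 ≤ 5*(1-β) := by nlinarith [mul_nonneg c1p (show (0:ℝ) ≤ 4 - β - β^2 - β^3 by linarith)]
  have h55 : (1:ℝ) - β^5 ≤ 5*(1-β) := by nlinarith [mul_nonneg c1p (show (0:ℝ) ≤ 4 - β - β^2 - β^3 - β^4 by linarith)]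
  have hm1n : (0:ℝ) ≤ (1-β^2) * β ^ (0*k+(-1)*l+1) := mul_nonneg c2p (zpow_pos hβ0 _).le
  have hm2n : (0:ℝ) ≤ (1-β) * β ^ ((-3)*k+2*l+0) := mul_nonneg c1p (zpow_pos hβ0 _).le
  have hm3n : (0:ℝ) ≤ (1-β^2) * β ^ ((-2)*k+1*l+0) := mul_nonneg c2p (zpow_pos hβ0 _).le
  have hm4n : (0:ℝ) ≤ (1-β^3) * β ^ (4*k+(-3)*l+0) := mul_nonneg c3p (zpow_pos hβ0 _).le
  have hm5n : (0:ℝ) ≤ (1-β) * β ^ (4*k+(-4)*l+0) := mul_nonneg c1p (zpow_pos hβ0 _).le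
  have hm6n : (0:ℝ) ≤ (1-β) * β ^ (2*k+5*l+0) := mul_nonneg c1p (zpow_pos hβ0 _).le
  have hm7n : (0:ℝ) ≤ (1-β^4) * β ^ (1*k+5*l+0) := mul_nonneg c4p (zpow_pos hβ0 _).le
  have hP0 : (1-β) * β ^ (0*k+0*l+0) ≤ β/100 * ((1-β^2) * β ^ (0*k+(-1)*l+1)) :=
    tiny hβ0 hβ1 hsm c1p h51 hc2 (by omega)
  have hP2 : (1-β^3) * β ^ ((-2)*k+2*l+(-3)) ≤ β/100 * ((1-β^2) * β ^ (0*k+(-1)*l+1)) :=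
    tiny hβ0 hβ1 hsm c3p h53 hc2 (by omega)
  have hP4 : (1-β^5) * β ^ (2*k+4*l+(-5)) ≤ β/100 * ((1-β^2) * β ^ (0*k+(-1)*l+1)) :=
    tiny hβ0 hβ1 hsm c5p h55 hc2 (by omega)
  have hP5 : (1-β) * β ^ (1*k+1*l+0) ≤ β/100 * ((1-β^2) * β ^ (0*k+(-1)*l+1)) :=
    tiny hβ0 hβ1 hsm c1p h51 hc2 (by omega)
  have hP7 : (1-β) * β ^ (0*k+1*l+0) ≤ β/100 * ((1-β^2) * β ^ (0*k+(-1)*l+1)) :=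
    tiny hβ0 hβ1 hsm c1p h51 hc2 (by omega)
  have htn1 : (0:ℝ) ≤ β/100 * ((1-β^2) * β ^ (0*k+(-1)*l+1)) :=
    mul_nonneg (by positivity) (mul_nonneg c2p (zpow_pos hβ0 _).le)
  have htn5 : (0:ℝ) ≤ β/100 * ((1-β) * β ^ (4*k+(-4)*l+0)) :=
    mul_nonneg (by positivity) (mul_nonneg c1p (zpow_pos hβ0 _).le)
  have hcoefB1 : (0:ℝ) ≤ (1-β^2) - (1-β) - 7*(β/100)*(1-β^2) := by
    nlinarith [mul_nonneg (mul_nonneg hβ0.le c1p) (show (0:ℝ) ≤ 93 - 7*β by linarith)]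
  have hbud1 : (1-β) * β ^ (0*k+(-1)*l+1) + 7*(β/100 * ((1-β^2) * β ^ (0*k+(-1)*l+1))) ≤ (1-β^2) * β ^ (0*k+(-1)*l+1) := by
    nlinarith [mul_nonneg hcoefB1 (zpow_pos hβ0 (0*k+(-1)*l+1)).le]
  have hbud5 : β/100 * ((1-β) * β ^ (4*k+(-4)*l+0)) ≤ (1-β) * β ^ (4*k+(-4)*l+0) := by
    nlinarith [mul_nonneg (mul_nonneg c1p (zpow_pos hβ0 (4*k+(-4)*l+0)).le) (show (0:ℝ) ≤ 1 - β/100 by linarith)]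
  have h16 : (1-β) * β ^ ((-1)*k+0*l+0) + (1-β) * β ^ (1*k+0*l+0) ≤ (1-β) * β ^ (0*k+(-1)*l+1) + β/100 * ((1-β^2) * β ^ (0*k+(-1)*l+1)) := by
    rcases le_or_gt 0 k with hk0 | hk0
    · have t1 : (1-β) * β ^ ((-1)*k+0*l+0) ≤ (1-β) * β ^ (0*k+(-1)*l+1) :=
        mul_le_mul_of_nonneg_left (bmono hβ0 hβ1 (by omega)) c1p
      have t6 : (1-β) * β ^ (1*k+0*l+0) ≤ β/100 * ((1-β^2) * β ^ (0*k+(-1)*l+1)) :=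
        tiny hβ0 hβ1 hsm c1p h51 hc2 (by omega)
      linarith
    · have t6 : (1-β) * β ^ (1*k+0*l+0) ≤ (1-β) * β ^ (0*k+(-1)*l+1) :=
        mul_le_mul_of_nonneg_left (bmono hβ0 hβ1 (by omega)) c1p
      have t1 : (1-β) * β ^ ((-1)*k+0*l+0) ≤ β/100 * ((1-β^2) * β ^ (0*k+(-1)*l+1)) :=
        tiny hβ0 hβ1 hsm c1p h51 hc2 (by omega)
      linarith
  rcases le_or_gt (3*(l-k)) (l-n₁-15) with hp3 | hp3
  · have hP3 : (1-β^4) * β ^ (3*k+(-3)*l+(-4)) ≤ β/100 * ((1-β^2) * β ^ (0*k+(-1)*l+1)) :=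
      tiny hβ0 hβ1 hsm c4p h54 hc2 (by omega)
    linarith [hP0,hP2,hP3,hP4,hP5,hP7,h16,hbud1,hbud5,hm1n,hm2n,hm3n,hm4n,hm5n,hm6n,hm7n,htn1,htn5]
  · have hP3 : (1-β^4) * β ^ (3*k+(-3)*l+(-4)) ≤ β/100 * ((1-β) * β ^ (4*k+(-4)*l+0)) :=
      tiny hβ0 hβ1 hsm c4p h54 (le_refl ((1:ℝ)-β)) (by omega)
    linarith [hP0,hP2,hP3,hP4,hP5,hP7,h16,hbud1,hbud5,hm1n,hm2n,hm3n,hm4n,hm5n,hm6n,hm7n,htn1,htn5]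

private lemma caseC (β : ℝ) (hβ0 : 0 < β) (hβ1 : β < 1) (n₁ : ℤ) (hn₁ : 1 ≤ n₁)
    (hsm : β ^ n₁ ≤ β / 1000) (k l : ℤ) (hk : k ≤ -(10*n₁+100)) (hl : -(10*n₁+100) < l) :
    (1-β) * β ^ (0*k+0*l+0) + (1-β) * β ^ ((-1)*k+0*l+0) + (1-β^3) * β ^ ((-2)*k+2*l+(-3)) + (1-β^4) * β ^ (3*k+(-3)*l+(-4)) + (1-β^5) * β ^ (2*k+4*l+(-5)) + (1-β) * β ^ (1*k+1*l+0) + (1-β) * β ^ (1*k+0*l+0) + (1-β) * β ^ (0*k+1*l+0)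
    ≤ (1-β^2) * β ^ (0*k+(-1)*l+1) + (1-β) * β ^ ((-3)*k+2*l+0) + (1-β^2) * β ^ ((-2)*k+1*l+0) + (1-β^3) * β ^ (4*k+(-3)*l+0) + (1-β) * β ^ (4*k+(-4)*l+0) + (1-β) * β ^ (2*k+5*l+0) + (1-β^4) * β ^ (1*k+5*l+0) := by
  have c1p : (0:ℝ) ≤ 1 - β := by linarith
  have hb2 : β^2 ≤ β := by nlinarith
  have hb3 : β^3 ≤ β^2 := by nlinarith
  have hb4 : β^4 ≤ β^3 := by nlinarith
  have hb5 : β^5 ≤ β^4 := by nlinarith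
  have hq2 : (0:ℝ) ≤ β^2 := by positivity
  have hq3 : (0:ℝ) ≤ β^3 := by positivity
  have hq4 : (0:ℝ) ≤ β^4 := by positivity
  have hq5 : (0:ℝ) ≤ β^5 := by positivity
  have c2p : (0:ℝ) ≤ 1 - β^2 := by linarith
  have c3p : (0:ℝ) ≤ 1 - β^3 := by linarith
  have c4p : (0:ℝ) ≤ 1 - β^4 := by linarith
  have c5p : (0:ℝ) ≤ 1 - β^5 := by linarith
  have hc2 : (1:ℝ) - β ≤ 1 - β^2 := by linarith
  have hc3 : (1:ℝ) - β ≤ 1 - β^3 := by linarith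
  have hc4 : (1:ℝ) - β ≤ 1 - β^4 := by linarith
  have h51 : (1:ℝ) - β ≤ 5*(1-β) := by linarith
  have h53 : (1:ℝ) - β^3 ≤ 5*(1-β) := by nlinarith [mul_nonneg c1p (show (0:ℝ) ≤ 2 - β - β^2 by linarith)]
  have h54 : (1:ℝ) - β^4 ≤ 5*(1-β) := by nlinarith [mul_nonneg c1p (show (0:ℝ) ≤ 4 - β - β^2 - β^3 by linarith)]
  have h55 : (1:ℝ) - β^5 ≤ 5*(1-β) := by nlinarith [mul_nonneg c1p (show (0:ℝ) ≤ 4 - β - β^2 - β^3 - β^4 by linarith)]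
  have hm1n : (0:ℝ) ≤ (1-β^2) * β ^ (0*k+(-1)*l+1) := mul_nonneg c2p (zpow_pos hβ0 _).le
  have hm2n : (0:ℝ) ≤ (1-β) * β ^ ((-3)*k+2*l+0) := mul_nonneg c1p (zpow_pos hβ0 _).le
  have hm3n : (0:ℝ) ≤ (1-β^2) * β ^ ((-2)*k+1*l+0) := mul_nonneg c2p (zpow_pos hβ0 _).le
  have hm4n : (0:ℝ) ≤ (1-β^3) * β ^ (4*k+(-3)*l+0) := mul_nonneg c3p (zpow_pos hβ0 _).le
  have hm5n : (0:ℝ) ≤ (1-β) * β ^ (4*k+(-4)*l+0) := mul_nonneg c1p (zpow_pos hβ0 _).le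
  have hm6n : (0:ℝ) ≤ (1-β) * β ^ (2*k+5*l+0) := mul_nonneg c1p (zpow_pos hβ0 _).le
  have hm7n : (0:ℝ) ≤ (1-β^4) * β ^ (1*k+5*l+0) := mul_nonneg c4p (zpow_pos hβ0 _).le
  have hP0 : (1-β) * β ^ (0*k+0*l+0) ≤ β/100 * ((1-β^3) * β ^ (4*k+(-3)*l+0)) :=
    tiny hβ0 hβ1 hsm c1p h51 hc3 (by omega)
  have hP1 : (1-β) * β ^ ((-1)*k+0*l+0) ≤ β/100 * ((1-β^3) * β ^ (4*k+(-3)*l+0)) :=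
    tiny hβ0 hβ1 hsm c1p h51 hc3 (by omega)
  have hP2 : (1-β^3) * β ^ ((-2)*k+2*l+(-3)) ≤ β/100 * ((1-β^3) * β ^ (4*k+(-3)*l+0)) :=
    tiny hβ0 hβ1 hsm c3p h53 hc3 (by omega)
  have hP3 : (1-β^4) * β ^ (3*k+(-3)*l+(-4)) ≤ β/100 * ((1-β^3) * β ^ (4*k+(-3)*l+0)) :=
    tiny hβ0 hβ1 hsm c4p h54 hc3 (by omega)
  have hP6 : (1-β) * β ^ (1*k+0*l+0) ≤ (1-β) * β ^ (4*k+(-3)*l+3) :=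
    mul_le_mul_of_nonneg_left (bmono hβ0 hβ1 (by omega)) c1p
  have htn4 : (0:ℝ) ≤ β/100 * ((1-β^3) * β ^ (4*k+(-3)*l+0)) :=
    mul_nonneg (by positivity) (mul_nonneg c3p (zpow_pos hβ0 _).le)
  have htn6 : (0:ℝ) ≤ β/100 * ((1-β) * β ^ (2*k+5*l+0)) :=
    mul_nonneg (by positivity) (mul_nonneg c1p (zpow_pos hβ0 _).le)
  have hsplit43 : (β:ℝ) ^ (4*k+(-3)*l+3) = β ^ (4*k+(-3)*l+0) * β ^ (3:ℤ) := by
    rw [show 4*k+(-3)*l+3 = (4*k+(-3)*l+0)+3 by ring, zpow_add₀ (ne_of_gt hβ0)]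
  have h3nat : (β:ℝ) ^ (3:ℤ) = β ^ 3 := zpow_ofNat β 3
  have hcoefC4 : (0:ℝ) ≤ (1-β^3) - (1-β)*β^3 - 7*(β/100)*(1-β^3) := by
    nlinarith [mul_nonneg c1p (show (0:ℝ) ≤ 100 + 93*β + 93*β^2 - 107*β^3 by linarith)]
  have hbud4 : (1-β) * β ^ (4*k+(-3)*l+3) + 7*(β/100 * ((1-β^3) * β ^ (4*k+(-3)*l+0))) ≤ (1-β^3) * β ^ (4*k+(-3)*l+0) := by
    rw [hsplit43, h3nat]
    nlinarith [mul_nonneg hcoefC4 (zpow_pos hβ0 (4*k+(-3)*l+0)).le]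
  have hbud6 : 3*(β/100 * ((1-β) * β ^ (2*k+5*l+0))) ≤ (1-β) * β ^ (2*k+5*l+0) := by
    nlinarith [mul_nonneg (mul_nonneg c1p (zpow_pos hβ0 (2*k+5*l+0)).le) (show (0:ℝ) ≤ 1 - 3*(β/100) by linarith)]
  rcases le_or_gt (-(n₁+15)) l with hsp | hsp
  · have hP4 : (1-β^5) * β ^ (2*k+4*l+(-5)) ≤ β/100 * ((1-β^3) * β ^ (4*k+(-3)*l+0)) :=
      tiny hβ0 hβ1 hsm c5p h55 hc3 (by omega)
    have hP5 : (1-β) * β ^ (1*k+1*l+0) ≤ β/100 * ((1-β^3) * β ^ (4*k+(-3)*l+0)) :=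
        tiny hβ0 hβ1 hsm c1p h51 hc3 (by omega)
    have hP7 : (1-β) * β ^ (0*k+1*l+0) ≤ β/100 * ((1-β^3) * β ^ (4*k+(-3)*l+0)) :=
        tiny hβ0 hβ1 hsm c1p h51 hc3 (by omega)
    linarith [hP0,hP1,hP2,hP3,hP4,hP5,hP6,hP7,hbud4,hbud6,hm1n,hm2n,hm3n,hm4n,hm5n,hm6n,hm7n,htn4,htn6]
  · have hP4 : (1-β^5) * β ^ (2*k+4*l+(-5)) ≤ β/100 * ((1-β) * β ^ (2*k+5*l+0)) :=
      tiny hβ0 hβ1 hsm c5p h55 (le_refl ((1:ℝ)-β)) (by omega)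
    have hP5 : (1-β) * β ^ (1*k+1*l+0) ≤ β/100 * ((1-β) * β ^ (2*k+5*l+0)) :=
        tiny hβ0 hβ1 hsm c1p h51 (le_refl ((1:ℝ)-β)) (by omega)
    have hP7 : (1-β) * β ^ (0*k+1*l+0) ≤ β/100 * ((1-β) * β ^ (2*k+5*l+0)) :=
        tiny hβ0 hβ1 hsm c1p h51 (le_refl ((1:ℝ)-β)) (by omega)
    linarith [hP0,hP1,hP2,hP3,hP4,hP5,hP6,hP7,hbud4,hbud6,hm1n,hm2n,hm3n,hm4n,hm5n,hm6n,hm7n,htn4,htn6]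

private lemma caseD (β : ℝ) (hβ0 : 0 < β) (hβ1 : β < 1) (n₁ : ℤ) (hn₁ : 1 ≤ n₁)
    (hsm : β ^ n₁ ≤ β / 1000) (k l : ℤ) (hl : l ≤ -(10*n₁+100)) (hk : k ≤ 10*n₁+99) :
    (1-β) * β ^ (0*k+0*l+0) + (1-β) * β ^ ((-1)*k+0*l+0) + (1-β^3) * β ^ ((-2)*k+2*l+(-3)) + (1-β^4) * β ^ (3*k+(-3)*l+(-4)) + (1-β^5) * β ^ (2*k+4*l+(-5)) + (1-β) * β ^ (1*k+1*l+0) + (1-β) * β ^ (1*k+0*l+0) + (1-β) * β ^ (0*k+1*l+0)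
    ≤ (1-β^2) * β ^ (0*k+(-1)*l+1) + (1-β) * β ^ ((-3)*k+2*l+0) + (1-β^2) * β ^ ((-2)*k+1*l+0) + (1-β^3) * β ^ (4*k+(-3)*l+0) + (1-β) * β ^ (4*k+(-4)*l+0) + (1-β) * β ^ (2*k+5*l+0) + (1-β^4) * β ^ (1*k+5*l+0) := by
  have c1p : (0:ℝ) ≤ 1 - β := by linarith
  have hb2 : β^2 ≤ β := by nlinarith
  have hb3 : β^3 ≤ β^2 := by nlinarith
  have hb4 : β^4 ≤ β^3 := by nlinarith
  have hb5 : β^5 ≤ β^4 := by nlinarith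
  have hq2 : (0:ℝ) ≤ β^2 := by positivity
  have hq3 : (0:ℝ) ≤ β^3 := by positivity
  have hq4 : (0:ℝ) ≤ β^4 := by positivity
  have hq5 : (0:ℝ) ≤ β^5 := by positivity
  have c2p : (0:ℝ) ≤ 1 - β^2 := by linarith
  have c3p : (0:ℝ) ≤ 1 - β^3 := by linarith
  have c4p : (0:ℝ) ≤ 1 - β^4 := by linarith
  have c5p : (0:ℝ) ≤ 1 - β^5 := by linarith
  have hc2 : (1:ℝ) - β ≤ 1 - β^2 := by linarith
  have hc3 : (1:ℝ) - β ≤ 1 - β^3 := by linarith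
  have hc4 : (1:ℝ) - β ≤ 1 - β^4 := by linarith
  have h51 : (1:ℝ) - β ≤ 5*(1-β) := by linarith
  have h53 : (1:ℝ) - β^3 ≤ 5*(1-β) := by nlinarith [mul_nonneg c1p (show (0:ℝ) ≤ 2 - β - β^2 by linarith)]
  have h54 : (1:ℝ) - β^4 ≤ 5*(1-β) := by nlinarith [mul_nonneg c1p (show (0:ℝ) ≤ 4 - β - β^2 - β^3 by linarith)]
  have h55 : (1:ℝ) - β^5 ≤ 5*(1-β) := by nlinarith [mul_nonneg c1p (show (0:ℝ) ≤ 4 - β - β^2 - β^3 - β^4 by linarith)]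
  have hm1n : (0:ℝ) ≤ (1-β^2) * β ^ (0*k+(-1)*l+1) := mul_nonneg c2p (zpow_pos hβ0 _).le
  have hm2n : (0:ℝ) ≤ (1-β) * β ^ ((-3)*k+2*l+0) := mul_nonneg c1p (zpow_pos hβ0 _).le
  have hm3n : (0:ℝ) ≤ (1-β^2) * β ^ ((-2)*k+1*l+0) := mul_nonneg c2p (zpow_pos hβ0 _).le
  have hm4n : (0:ℝ) ≤ (1-β^3) * β ^ (4*k+(-3)*l+0) := mul_nonneg c3p (zpow_pos hβ0 _).le
  have hm5n : (0:ℝ) ≤ (1-β) * β ^ (4*k+(-4)*l+0) := mul_nonneg c1p (zpow_pos hβ0 _).le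
  have hm6n : (0:ℝ) ≤ (1-β) * β ^ (2*k+5*l+0) := mul_nonneg c1p (zpow_pos hβ0 _).le
  have hm7n : (0:ℝ) ≤ (1-β^4) * β ^ (1*k+5*l+0) := mul_nonneg c4p (zpow_pos hβ0 _).le
  have hP0 : (1-β) * β ^ (0*k+0*l+0) ≤ β/100 * ((1-β) * β ^ (2*k+5*l+0)) :=
    tiny hβ0 hβ1 hsm c1p h51 (le_refl ((1:ℝ)-β)) (by omega)
  have hP1 : (1-β) * β ^ ((-1)*k+0*l+0) ≤ β/100 * ((1-β) * β ^ (2*k+5*l+0)) :=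
    tiny hβ0 hβ1 hsm c1p h51 (le_refl ((1:ℝ)-β)) (by omega)
  have hP2 : (1-β^3) * β ^ ((-2)*k+2*l+(-3)) ≤ (1-β^3) * β ^ (1*k+5*l+0) :=
    mul_le_mul_of_nonneg_left (bmono hβ0 hβ1 (by omega)) c3p
  have hP4 : (1-β^5) * β ^ (2*k+4*l+(-5)) ≤ β/100 * ((1-β) * β ^ (2*k+5*l+0)) :=
    tiny hβ0 hβ1 hsm c5p h55 (le_refl ((1:ℝ)-β)) (by omega)
  have hP5 : (1-β) * β ^ (1*k+1*l+0) ≤ β/100 * ((1-β) * β ^ (2*k+5*l+0)) :=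
    tiny hβ0 hβ1 hsm c1p h51 (le_refl ((1:ℝ)-β)) (by omega)
  have hP6 : (1-β) * β ^ (1*k+0*l+0) ≤ β/100 * ((1-β) * β ^ (2*k+5*l+0)) :=
    tiny hβ0 hβ1 hsm c1p h51 (le_refl ((1:ℝ)-β)) (by omega)
  have hP7 : (1-β) * β ^ (0*k+1*l+0) ≤ β/100 * ((1-β) * β ^ (2*k+5*l+0)) :=
    tiny hβ0 hβ1 hsm c1p h51 (le_refl ((1:ℝ)-β)) (by omega)
  have htn6 : (0:ℝ) ≤ β/100 * ((1-β) * β ^ (2*k+5*l+0)) :=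
    mul_nonneg (by positivity) (mul_nonneg c1p (zpow_pos hβ0 _).le)
  have htn5 : (0:ℝ) ≤ β/100 * ((1-β) * β ^ (4*k+(-4)*l+0)) :=
    mul_nonneg (by positivity) (mul_nonneg c1p (zpow_pos hβ0 _).le)
  have hbud7 : (1-β^3) * β ^ (1*k+5*l+0) ≤ (1-β^4) * β ^ (1*k+5*l+0) := by
    nlinarith [mul_nonneg (zpow_pos hβ0 (1*k+5*l+0)).le (show (0:ℝ) ≤ β^3 - β^4 by linarith)]
  have hbud6 : 7*(β/100 * ((1-β) * β ^ (2*k+5*l+0))) ≤ (1-β) * β ^ (2*k+5*l+0) := by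
    nlinarith [mul_nonneg (mul_nonneg c1p (zpow_pos hβ0 (2*k+5*l+0)).le) (show (0:ℝ) ≤ 1 - 7*(β/100) by linarith)]
  have hbud5 : β/100 * ((1-β) * β ^ (4*k+(-4)*l+0)) ≤ (1-β) * β ^ (4*k+(-4)*l+0) := by
    nlinarith [mul_nonneg (mul_nonneg c1p (zpow_pos hβ0 (4*k+(-4)*l+0)).le) (show (0:ℝ) ≤ 1 - β/100 by linarith)]
  rcases le_or_gt (l-k) (n₁+15) with hsp | hsp
  · have hP3 : (1-β^4) * β ^ (3*k+(-3)*l+(-4)) ≤ β/100 * ((1-β) * β ^ (2*k+5*l+0)) :=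
      tiny hβ0 hβ1 hsm c4p h54 (le_refl ((1:ℝ)-β)) (by omega)
    linarith [hP0,hP1,hP2,hP3,hP4,hP5,hP6,hP7,hbud7,hbud6,hbud5,hm1n,hm2n,hm3n,hm4n,hm5n,hm6n,hm7n,htn6,htn5]
  · have hP3 : (1-β^4) * β ^ (3*k+(-3)*l+(-4)) ≤ β/100 * ((1-β) * β ^ (4*k+(-4)*l+0)) :=
      tiny hβ0 hβ1 hsm c4p h54 (le_refl ((1:ℝ)-β)) (by omega)
    linarith [hP0,hP1,hP2,hP3,hP4,hP5,hP6,hP7,hbud7,hbud6,hbud5,hm1n,hm2n,hm3n,hm4n,hm5n,hm6n,hm7n,htn6,htn5]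

private lemma core (β : ℝ) (hβ0 : 0 < β) (hβ1 : β < 1) (n₁ : ℤ) (hn₁ : 1 ≤ n₁)
    (hsm : β ^ n₁ ≤ β / 1000) (k l : ℤ)
    (hbig : 10*n₁+100 ≤ k ∨ k ≤ -(10*n₁+100) ∨ 10*n₁+100 ≤ l ∨ l ≤ -(10*n₁+100)) :
    (1-β) * β ^ (0*k+0*l+0) + (1-β) * β ^ ((-1)*k+0*l+0) + (1-β^3) * β ^ ((-2)*k+2*l+(-3)) + (1-β^4) * β ^ (3*k+(-3)*l+(-4)) + (1-β^5) * β ^ (2*k+4*l+(-5)) + (1-β) * β ^ (1*k+1*l+0) + (1-β) * β ^ (1*k+0*l+0) + (1-β) * β ^ (0*k+1*l+0)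
    ≤ (1-β^2) * β ^ (0*k+(-1)*l+1) + (1-β) * β ^ ((-3)*k+2*l+0) + (1-β^2) * β ^ ((-2)*k+1*l+0) + (1-β^3) * β ^ (4*k+(-3)*l+0) + (1-β) * β ^ (4*k+(-4)*l+0) + (1-β) * β ^ (2*k+5*l+0) + (1-β^4) * β ^ (1*k+5*l+0) := by
  rcases le_or_gt k (-(10*n₁+100)) with hkC | hkC
  · rcases le_or_gt l (-(10*n₁+100)) with hlD | hlD
    · exact caseD β hβ0 hβ1 n₁ hn₁ hsm k l hlD (by omega)
    · exact caseC β hβ0 hβ1 n₁ hn₁ hsm k l hkC hlD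
  · rcases le_or_gt l (-(10*n₁+100)) with hlD | hlD
    · rcases le_or_gt (10*n₁+100) k with hkA | hkA
      · exact caseA β hβ0 hβ1 n₁ hn₁ hsm k l hkA (by omega)
      · exact caseD β hβ0 hβ1 n₁ hn₁ hsm k l hlD (by omega)
    · rcases le_or_gt (10*n₁+100) k with hkA | hkA
      · rcases le_or_gt l k with hlk | hlk
        · exact caseA β hβ0 hβ1 n₁ hn₁ hsm k l hkA hlk
        · exact caseB β hβ0 hβ1 n₁ hn₁ hsm k l (by omega) hlk (by omega)
      · have hlB : 10*n₁+100 ≤ l := by omega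
        exact caseB β hβ0 hβ1 n₁ hn₁ hsm k l hlB (by omega) (by omega)

/-- Lemma 1 of the paper: Lyapunov drift bound for the asymmetric chain, `N = 2`. -/
theorem stmt_5 (β : ℝ) (hβ0 : 0 < β) (hβ1 : β < 1)
    (f : ℤ × ℤ → ℝ)
    (hf : ∀ x : ℤ × ℤ, f x = β ^ (1 - x.1 - x.2) + β ^ (-3 * x.1 + x.2)
        + β ^ (3 * x.1 - 4 * x.2) + β ^ (x.1 + 4 * x.2)) :
    ∃ C > (0 : ℝ), ∀ x₁ x₂ : ℤ, ((x₁ : ℝ)^2 + (x₂ : ℝ)^2 > C^2) →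
      (β ^ (x₁ + x₂) / (β ^ (x₁ + x₂) + β ^ x₂ + β ^ x₁)) * (f (x₁ + 1, x₂) - f (x₁, x₂))
      + (β ^ x₂ / (β ^ (x₁ + x₂) + β ^ x₂ + β ^ x₁)) * (f (x₁, x₂ + 1) - f (x₁, x₂))
      + (β ^ x₁ / (β ^ (x₁ + x₂) + β ^ x₂ + β ^ x₁)) * (f (x₁ - 1, x₂ - 1) - f (x₁, x₂))
      ≤ -(1 - β) := by
  obtain ⟨m, hm⟩ := exists_pow_lt_of_lt_one (show (0:ℝ) < β/1000 by positivity) hβ1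
  set n₁ : ℤ := (m : ℤ) + 1 with hn₁def
  have hmnn : (0:ℤ) ≤ (m:ℤ) := Int.natCast_nonneg m
  have hn₁ : 1 ≤ n₁ := by omega
  have hsm : β ^ n₁ ≤ β / 1000 := by
    have h1 : β ^ n₁ = β ^ (m:ℤ) * β := by
      rw [hn₁def, zpow_add₀ (ne_of_gt hβ0), zpow_one]
    have h2 : β ^ (m:ℤ) = β ^ m := zpow_natCast β m
    have h3 : (0:ℝ) < β ^ m := by positivity
    rw [h1, h2]
    nlinarith [hm, h3]
  refine ⟨((20*n₁+200 : ℤ) : ℝ), by exact_mod_cast (by omega : (0:ℤ) < 20*n₁+200), ?_⟩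
  intro k l hfar
  have hbig : 10*n₁+100 ≤ k ∨ k ≤ -(10*n₁+100) ∨ 10*n₁+100 ≤ l ∨ l ≤ -(10*n₁+100) := by
    by_contra hcon
    push_neg at hcon
    obtain ⟨h1, h2, h3, h4⟩ := hcon
    have r1 : (k:ℝ) < ((10*n₁+100 : ℤ):ℝ) := by exact_mod_cast h1
    have r2 : -((10*n₁+100 : ℤ):ℝ) < (k:ℝ) := by
      have : -(10*n₁+100) < k := by omega
      exact_mod_cast this
    have r3 : (l:ℝ) < ((10*n₁+100 : ℤ):ℝ) := by exact_mod_cast h3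
    have r4 : -((10*n₁+100 : ℤ):ℝ) < (l:ℝ) := by
      have : -(10*n₁+100) < l := by omega
      exact_mod_cast this
    have hC : (((20*n₁+200 : ℤ)):ℝ) = 2 * ((10*n₁+100 : ℤ):ℝ) := by push_cast; ring
    have hN0 : (0:ℝ) < ((10*n₁+100 : ℤ):ℝ) := by
      exact_mod_cast (by omega : (0:ℤ) < 10*n₁+100)
    rw [hC] at hfar
    nlinarith [mul_pos (sub_pos.2 r1) (show (0:ℝ) < (k:ℝ) + ((10*n₁+100 : ℤ):ℝ) by linarith),
      mul_pos (sub_pos.2 r3) (show (0:ℝ) < (l:ℝ) + ((10*n₁+100 : ℤ):ℝ) by linarith),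
      mul_pos hN0 hN0, hfar]
  have hZ : (0:ℝ) < β ^ (k + l) + β ^ l + β ^ k := by positivity
  rw [div_mul_eq_mul_div, div_mul_eq_mul_div, div_mul_eq_mul_div, ← add_div,
    ← add_div, div_le_iff₀ hZ]
  have hPM := core β hβ0 hβ1 n₁ hn₁ hsm k l hbig
  have hf1 : f (k + 1, l) = β ^ (1 - (k + 1) - l) + β ^ (-3 * (k + 1) + l)
      + β ^ (3 * (k + 1) - 4 * l) + β ^ (k + 1 + 4 * l) := hf (k + 1, l)
  have hf2 : f (k, l + 1) = β ^ (1 - k - (l + 1)) + β ^ (-3 * k + (l + 1))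
      + β ^ (3 * k - 4 * (l + 1)) + β ^ (k + 4 * (l + 1)) := hf (k, l + 1)
  have hf3 : f (k - 1, l - 1) = β ^ (1 - (k - 1) - (l - 1)) + β ^ (-3 * (k - 1) + (l - 1))
      + β ^ (3 * (k - 1) - 4 * (l - 1)) + β ^ (k - 1 + 4 * (l - 1)) := hf (k - 1, l - 1)
  have hf0 : f (k, l) = β ^ (1 - k - l) + β ^ (-3 * k + l)
      + β ^ (3 * k - 4 * l) + β ^ (k + 4 * l) := hf (k, l)
  have hsplit : ∀ α γ c : ℤ, β ^ (α * k + γ * l + c) = (β ^ k) ^ α * (β ^ l) ^ γ * β ^ c := by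
    intro α γ c
    rw [zpow_add₀ (ne_of_gt hβ0), zpow_add₀ (ne_of_gt hβ0), mul_comm α k, mul_comm γ l,
      zpow_mul, zpow_mul]
  have hiden : β ^ (k + l) * (f (k + 1, l) - f (k, l)) + β ^ l * (f (k, l + 1) - f (k, l))
      + β ^ k * (f (k - 1, l - 1) - f (k, l)) + (1-β) * (β ^ (k + l) + β ^ l + β ^ k)
      = ((1-β) * β ^ (0*k+0*l+0) + (1-β) * β ^ ((-1)*k+0*l+0) + (1-β^3) * β ^ ((-2)*k+2*l+(-3)) + (1-β^4) * β ^ (3*k+(-3)*l+(-4)) + (1-β^5) * β ^ (2*k+4*l+(-5)) + (1-β) * β ^ (1*k+1*l+0) + (1-β) * β ^ (1*k+0*l+0) + (1-β) * β ^ (0*k+1*l+0))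
      - ((1-β^2) * β ^ (0*k+(-1)*l+1) + (1-β) * β ^ ((-3)*k+2*l+0) + (1-β^2) * β ^ ((-2)*k+1*l+0) + (1-β^3) * β ^ (4*k+(-3)*l+0) + (1-β) * β ^ (4*k+(-4)*l+0) + (1-β) * β ^ (2*k+5*l+0) + (1-β^4) * β ^ (1*k+5*l+0)) := by
    rw [hf1, hf2, hf3, hf0]
    rw [show (β:ℝ) ^ (1 - k - l) = β ^ ((-1)*k+(-1)*l+1) from congrArg (β ^ ·) (by ring : (1 - k - l : ℤ) = (-1)*k+(-1)*l+1)]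
    rw [show (β:ℝ) ^ (-3 * k + l) = β ^ ((-3)*k+1*l+0) from congrArg (β ^ ·) (by ring : (-3 * k + l : ℤ) = (-3)*k+1*l+0)]
    rw [show (β:ℝ) ^ (3 * k - 4 * l) = β ^ (3*k+(-4)*l+0) from congrArg (β ^ ·) (by ring : (3 * k - 4 * l : ℤ) = 3*k+(-4)*l+0)]
    rw [show (β:ℝ) ^ (k + 4 * l) = β ^ (1*k+4*l+0) from congrArg (β ^ ·) (by ring : (k + 4 * l : ℤ) = 1*k+4*l+0)]
    rw [show (β:ℝ) ^ (1 - (k + 1) - l) = β ^ ((-1)*k+(-1)*l+0) from congrArg (β ^ ·) (by ring : (1 - (k + 1) - l : ℤ) = (-1)*k+(-1)*l+0)]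
    rw [show (β:ℝ) ^ (-3 * (k + 1) + l) = β ^ ((-3)*k+1*l+(-3)) from congrArg (β ^ ·) (by ring : (-3 * (k + 1) + l : ℤ) = (-3)*k+1*l+(-3))]
    rw [show (β:ℝ) ^ (3 * (k + 1) - 4 * l) = β ^ (3*k+(-4)*l+3) from congrArg (β ^ ·) (by ring : (3 * (k + 1) - 4 * l : ℤ) = 3*k+(-4)*l+3)]
    rw [show (β:ℝ) ^ (k + 1 + 4 * l) = β ^ (1*k+4*l+1) from congrArg (β ^ ·) (by ring : (k + 1 + 4 * l : ℤ) = 1*k+4*l+1)]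
    rw [show (β:ℝ) ^ (1 - k - (l + 1)) = β ^ ((-1)*k+(-1)*l+0) from congrArg (β ^ ·) (by ring : (1 - k - (l + 1) : ℤ) = (-1)*k+(-1)*l+0)]
    rw [show (β:ℝ) ^ (-3 * k + (l + 1)) = β ^ ((-3)*k+1*l+1) from congrArg (β ^ ·) (by ring : (-3 * k + (l + 1) : ℤ) = (-3)*k+1*l+1)]
    rw [show (β:ℝ) ^ (3 * k - 4 * (l + 1)) = β ^ (3*k+(-4)*l+(-4)) from congrArg (β ^ ·) (by ring : (3 * k - 4 * (l + 1) : ℤ) = 3*k+(-4)*l+(-4))]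
    rw [show (β:ℝ) ^ (k + 4 * (l + 1)) = β ^ (1*k+4*l+4) from congrArg (β ^ ·) (by ring : (k + 4 * (l + 1) : ℤ) = 1*k+4*l+4)]
    rw [show (β:ℝ) ^ (1 - (k - 1) - (l - 1)) = β ^ ((-1)*k+(-1)*l+3) from congrArg (β ^ ·) (by ring : (1 - (k - 1) - (l - 1) : ℤ) = (-1)*k+(-1)*l+3)]
    rw [show (β:ℝ) ^ (-3 * (k - 1) + (l - 1)) = β ^ ((-3)*k+1*l+2) from congrArg (β ^ ·) (by ring : (-3 * (k - 1) + (l - 1) : ℤ) = (-3)*k+1*l+2)]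
    rw [show (β:ℝ) ^ (3 * (k - 1) - 4 * (l - 1)) = β ^ (3*k+(-4)*l+1) from congrArg (β ^ ·) (by ring : (3 * (k - 1) - 4 * (l - 1) : ℤ) = 3*k+(-4)*l+1)]
    rw [show (β:ℝ) ^ (k - 1 + 4 * (l - 1)) = β ^ (1*k+4*l+(-5)) from congrArg (β ^ ·) (by ring : (k - 1 + 4 * (l - 1) : ℤ) = 1*k+4*l+(-5))]
    rw [show (β:ℝ) ^ (k + l) = β ^ (1*k+1*l+0) from congrArg (β ^ ·) (by ring : (k + l : ℤ) = 1*k+1*l+0)]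
    rw [show (β:ℝ) ^ (k) = β ^ (1*k+0*l+0) from congrArg (β ^ ·) (by ring : (k : ℤ) = 1*k+0*l+0)]
    rw [show (β:ℝ) ^ (l) = β ^ (0*k+1*l+0) from congrArg (β ^ ·) (by ring : (l : ℤ) = 0*k+1*l+0)]
    simp only [hsplit]
    simp only [zpow_neg, zpow_ofNat, zpow_one, zpow_zero]
    have hkne : (β:ℝ) ^ k ≠ 0 := ne_of_gt (zpow_pos hβ0 k)
    have hlne : (β:ℝ) ^ l ≠ 0 := ne_of_gt (zpow_pos hβ0 l)
    have hβne : (β:ℝ) ≠ 0 := ne_of_gt hβ0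
    field_simp
    ring
  linarith [hPM, hiden]
end
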